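/- arXiv:2302.11839 — 3 statements merged into one kernel-verified Lean document; each statement's English description precedes it below -/
import Mathlib

section
/- Let ℓ ≥ 4 and let G be a bipartite graph on n vertices that contains no path on ℓ vertices as a subgraph. Then e(G) ≤ (⌊ℓ/2⌋ - 1)·n. -/
open SimpleGraph Finset

/-- `G` contains a copy of `H` (as a subgraph): there is an injective graph
homomorphism from `H` to `G`. -/
def Contains {α β : Type*} (G : SimpleGraph α) (H : SimpleGraph β) : Prop :=
  ∃ f : H →g G, Function.Injective f

namespace StarPathForestAux

variable {V : Type*}

lemma contains_mono {α β : Type*} {G G' : SimpleGraph α} (h : G ≤ G') {H : SimpleGraph β}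
    (hc : Contains G H) : Contains G' H := by
  obtain ⟨f, hf⟩ := hc
  refine ⟨(SimpleGraph.Hom.ofLE h).comp f, ?_⟩
  intro a b hab
  exact hf (by simpa using hab)

lemma getVert_mem_support {G : SimpleGraph V} {u v : V} (w : G.Walk u v) (i : ℕ)
    (hi : i ≤ w.length) : w.getVert i ∈ w.support :=
  SimpleGraph.Walk.mem_support_iff_exists_getVert.2 ⟨i, rfl, hi⟩

lemma getVert_injOn {G : SimpleGraph V} {u v : V} (w : G.Walk u v) :
    w.IsPath → ∀ i, i ≤ w.length → ∀ j, j ≤ w.length →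
      w.getVert i = w.getVert j → i = j := by
  induction w with
  | nil =>
    intro _ i hi j hj _
    simp only [SimpleGraph.Walk.length_nil, Nat.le_zero] at hi hj
    omega
  | @cons a b cc h q ih =>
    intro hw i hi j hj heq
    rw [SimpleGraph.Walk.cons_isPath_iff] at hw
    match i, j with
    | 0, 0 => rfl
    | 0, j+1 =>
      exfalso
      apply hw.2
      have heq' : a = q.getVert j := by simpa using heq
      rw [heq']
      exact getVert_mem_support q j (by simpa using hj)
    | i+1, 0 =>
      exfalso
      apply hw.2
      have heq' : a = q.getVert i := by simpa using heq.symm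
      rw [heq']
      exact getVert_mem_support q i (by simpa using hi)
    | i+1, j+1 =>
      have := ih hw.1 i (by simpa using hi) j (by simpa using hj) (by simpa using heq)
      omega

lemma edges_getVert {G : SimpleGraph V} {u v : V} (w : G.Walk u v) :
    ∀ e ∈ w.edges, ∃ i, i < w.length ∧ e = s(w.getVert i, w.getVert (i+1)) := by
  induction w with
  | nil => simp
  | @cons a b cc h q ih =>
    intro e he
    rw [SimpleGraph.Walk.edges_cons, List.mem_cons] at he
    rcases he with he | he
    · exact ⟨0, by simp, by simpa using he⟩
    · obtain ⟨i, hi, hee⟩ := ih e he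
      exact ⟨i+1, by simpa using Nat.succ_lt_succ hi, by simpa using hee⟩

lemma coloring_getVert {G : SimpleGraph V} (c : G.Coloring (ZMod 2)) {u v : V}
    (w : G.Walk u v) : ∀ i, i ≤ w.length → c (w.getVert i) = c u + (i : ZMod 2) := by
  intro i
  induction i with
  | zero => simp
  | succ i ihi =>
    intro hi
    have h1 : i < w.length := by omega
    have h3 : c (w.getVert i) ≠ c (w.getVert (i+1)) := c.valid (w.adj_getVert_succ h1)
    have h4 : c (w.getVert (i+1)) = c (w.getVert i) + 1 := by
      revert h3
      generalize c (w.getVert i) = x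
      generalize c (w.getVert (i+1)) = y
      revert x y; decide
    rw [h4, ihi (by omega)]
    push_cast
    ring

lemma zmod_two_cast_eq_zero_iff (i : ℕ) : (i : ZMod 2) = 0 ↔ i % 2 = 0 := by
  rw [ZMod.natCast_eq_zero_iff]
  omega

lemma contains_of_path {G : SimpleGraph V} {u v : V} (w : G.Walk u v) (hw : w.IsPath)
    {L : ℕ} (hL : L ≤ w.length + 1) : Contains G (pathGraph L) := by
  refine ⟨⟨fun i => w.getVert i, ?_⟩, ?_⟩
  · intro a b hab
    rw [pathGraph_adj] at hab
    rcases hab with hab | hab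
    · have h1 : (a : ℕ) < w.length := by have := b.isLt; omega
      have := w.adj_getVert_succ h1
      rwa [hab] at this
    · have h1 : (b : ℕ) < w.length := by have := a.isLt; omega
      have := w.adj_getVert_succ h1
      rw [hab] at this
      exact this.symm
  · intro a b hab
    have hab' : w.getVert a = w.getVert b := hab
    exact Fin.ext (getVert_injOn w hw a (by have := a.isLt; omega) b
      (by have := b.isLt; omega) hab')

lemma length_rotate [DecidableEq V] {G : SimpleGraph V} {u v : V} (w : G.Walk v v) (h : u ∈ w.support) :
    (w.rotate u h).length = w.length := by
  have h2 := (SimpleGraph.Walk.rotate_darts w u h).perm.length_eq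
  rwa [SimpleGraph.Walk.length_darts, SimpleGraph.Walk.length_darts] at h2

/-- The graph obtained from `G` by deleting all edges incident to `S`. -/
def cut [DecidableEq V] (G : SimpleGraph V) (S : Finset V) : SimpleGraph V where
  Adj u v := G.Adj u v ∧ u ∉ S ∧ v ∉ S
  symm := ⟨fun u v ⟨h, hu, hv⟩ => ⟨h.symm, hv, hu⟩⟩
  loopless := ⟨fun u ⟨h, _, _⟩ => G.loopless.irrefl u h⟩

instance [DecidableEq V] (G : SimpleGraph V) [DecidableRel G.Adj] (S : Finset V) :
    DecidableRel (cut G S).Adj :=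
  fun u v => inferInstanceAs (Decidable (G.Adj u v ∧ u ∉ S ∧ v ∉ S))

lemma cut_le [DecidableEq V] (G : SimpleGraph V) (S : Finset V) : cut G S ≤ G := by
  intro u v h
  exact h.1

lemma cut_edgeFinset [Fintype V] [DecidableEq V] (G : SimpleGraph V) [DecidableRel G.Adj]
    (S : Finset V) :
    (cut G S).edgeFinset = G.edgeFinset.filter (fun e => ¬ ∃ x ∈ S, x ∈ e) := by
  ext e
  induction e using Sym2.ind with
  | _ a b =>
    simp only [mem_edgeFinset, mem_filter, mem_edgeSet, Sym2.mem_iff]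
    simp only [cut]
    constructor
    · rintro ⟨h, ha, hb⟩
      refine ⟨h, ?_⟩
      rintro ⟨x, hx, rfl | rfl⟩ <;> tauto
    · rintro ⟨h, hne⟩
      push_neg at hne
      exact ⟨h, fun ha => (hne a ha).1 rfl, fun hb => (hne b hb).2 rfl⟩

lemma edge_split [Fintype V] [DecidableEq V] (G : SimpleGraph V) [DecidableRel G.Adj]
    (S : Finset V) :
    G.edgeFinset.card
      = (G.edgeFinset.filter (fun e => ∃ x ∈ S, x ∈ e)).card + (cut G S).edgeFinset.card := by
  rw [cut_edgeFinset]
  exact (card_filter_add_card_filter_not (fun e => ∃ x ∈ S, x ∈ e)).symm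

lemma filter_singleton_card [Fintype V] [DecidableEq V] (G : SimpleGraph V)
    [DecidableRel G.Adj] (v : V) :
    (G.edgeFinset.filter (fun e => ∃ x ∈ ({v} : Finset V), x ∈ e)).card = G.degree v := by
  rw [← card_incidenceFinset_eq_degree]
  congr 1
  ext e
  simp only [mem_filter, mem_singleton, mem_incidenceFinset, mem_edgeFinset]
  constructor
  · rintro ⟨he, x, rfl, hx⟩
    exact ⟨he, hx⟩
  · rintro ⟨he, hx⟩
    exact ⟨he, v, rfl, hx⟩

lemma exists_adj_of_edge {G : SimpleGraph V} [Fintype V] [DecidableEq V]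
    [DecidableRel G.Adj] (h : G.edgeFinset.Nonempty) : ∃ a b, G.Adj a b := by
  obtain ⟨e, he⟩ := h
  rw [mem_edgeFinset] at he
  induction e using Sym2.ind with
  | _ a b => exact ⟨a, b, he⟩

lemma key (ℓ : ℕ) (hℓ : 4 ≤ ℓ) : ∀ (N : ℕ) {n : ℕ} (G : SimpleGraph (Fin n))
    [DecidableRel G.Adj] (c : G.Coloring (ZMod 2))
    (hfree : ¬ Contains G (pathGraph ℓ)) (s : Finset (Fin n)),
    s.card ≤ N → (∀ e ∈ G.edgeFinset, ∀ x ∈ e, x ∈ s) →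
    G.edgeFinset.card ≤ (ℓ / 2 - 1) * s.card := by
  intro N
  induction N with
  | zero =>
    intro n G hG c hfree s hsN hs
    have hs0 : s = ∅ := card_eq_zero.1 (Nat.le_zero.1 hsN)
    by_cases hE : G.edgeFinset = ∅
    · simp [hE]
    · obtain ⟨a, b, hab⟩ := exists_adj_of_edge (nonempty_of_ne_empty hE)
      have hmem := hs _ (mem_edgeFinset.2 ((mem_edgeSet G).2 hab)) a (Sym2.mem_mk_left _ _)
      rw [hs0] at hmem
      exact absurd hmem (notMem_empty _)
  | succ N ih =>
    intro n G hG c hfree s hsN hs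
    set m := ℓ / 2 with hm
    have hm2 : 2 ≤ m := by omega
    by_cases hlow : ∃ v ∈ s, G.degree v ≤ m - 1
    · -- a low-degree vertex: delete it
      obtain ⟨v, hvs, hvd⟩ := hlow
      have hle := cut_le G ({v} : Finset (Fin n))
      have hfree' : ¬ Contains (cut G {v}) (pathGraph ℓ) :=
        fun hc => hfree (contains_mono hle hc)
      have c' : (cut G {v}).Coloring (ZMod 2) := c.comp (Hom.ofLE hle)
      have hs' : ∀ e ∈ (cut G {v}).edgeFinset, ∀ x ∈ e, x ∈ s.erase v := by
        intro e he x hx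
        rw [cut_edgeFinset] at he; simp only [mem_filter] at he
        refine mem_erase.2 ⟨?_, hs e he.1 x hx⟩
        intro hxv
        exact he.2 ⟨x, by simp [hxv], hx⟩
      have hcard : (s.erase v).card ≤ N := by
        rw [card_erase_of_mem hvs]
        have : 1 ≤ s.card := card_pos.2 ⟨v, hvs⟩
        omega
      have hrec := ih (cut G {v}) c' hfree' (s.erase v) hcard hs'
      have hsplit := edge_split G ({v} : Finset (Fin n))
      rw [filter_singleton_card] at hsplit
      rw [card_erase_of_mem hvs] at hrec
      have hs1 : 1 ≤ s.card := card_pos.2 ⟨v, hvs⟩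
      have e1 : (m - 1) * s.card = (m - 1) * (s.card - 1) + (m - 1) := by
        rw [← Nat.mul_succ]
        congr 1
        omega
      linarith [hsplit, hrec, hvd, e1]
    · push_neg at hlow
      have hdeg : ∀ v ∈ s, m ≤ G.degree v := by
        intro v hv
        have := hlow v hv
        omega
      by_cases hE : G.edgeFinset = ∅
      · simp [hE]
      · obtain ⟨a, b, hab⟩ := exists_adj_of_edge (nonempty_of_ne_empty hE)
        -- the longest path
        set T : Set ℕ := {L | ∃ (x y : Fin n) (w : G.Walk x y), w.IsPath ∧ w.length = L}
          with hT
        have h1T : 1 ∈ T := by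
          refine ⟨a, b, SimpleGraph.Walk.cons hab SimpleGraph.Walk.nil, ?_, rfl⟩
          rw [SimpleGraph.Walk.cons_isPath_iff]
          exact ⟨SimpleGraph.Walk.IsPath.nil, by simp [hab.ne]⟩
        have hbdd : BddAbove T := by
          refine ⟨n, ?_⟩
          rintro L ⟨x, y, w, hw, rfl⟩
          have := hw.length_lt
          simpa using this.le
        have htT : sSup T ∈ T := Nat.sSup_mem ⟨1, h1T⟩ hbdd
        obtain ⟨x0, xt, p, hp, hlen⟩ := htT
        set t := sSup T with htdef
        have ht1 : 1 ≤ t := le_csSup hbdd h1T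
        have hmax : ∀ (x y : Fin n) (w : G.Walk x y), w.IsPath → w.length ≤ t :=
          fun x y w hw => le_csSup hbdd ⟨x, y, w, hw, rfl⟩
        have htℓ : t + 2 ≤ ℓ := by
          by_contra hcon
          exact hfree (contains_of_path p hp (by omega))
        have hx0s : x0 ∈ s := by
          have hadj : G.Adj x0 (p.getVert 1) := by
            have := p.adj_getVert_succ (show 0 < p.length by omega)
            simpa using this
          exact hs _ (mem_edgeFinset.2 ((mem_edgeSet G).2 hadj)) x0 (Sym2.mem_mk_left _ _)
        have hnbr : ∀ y, G.Adj x0 y → y ∈ p.support := by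
          intro y hy
          by_contra hyn
          have hpath : (SimpleGraph.Walk.cons hy.symm p).IsPath :=
            (SimpleGraph.Walk.cons_isPath_iff _ _).2 ⟨hp, hyn⟩
          have hle2 := hmax _ _ _ hpath
          rw [SimpleGraph.Walk.length_cons, hlen] at hle2
          omega
        -- neighbors of x0 sit at odd positions
        have hoddnbr : ∀ y, G.Adj x0 y → ∃ i, i ≤ p.length ∧ i % 2 = 1 ∧ y = p.getVert i := by
          intro y hy
          obtain ⟨i, hgi, hile⟩ :=
            SimpleGraph.Walk.mem_support_iff_exists_getVert.1 (hnbr y hy)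
          refine ⟨i, hile, ?_, hgi.symm⟩
          have hcy := coloring_getVert c p i hile
          rw [hgi] at hcy
          have hne : c x0 ≠ c y := c.valid hy
          by_contra h2
          have h2' : i % 2 = 0 := by omega
          rw [(zmod_two_cast_eq_zero_iff i).2 h2', add_zero] at hcy
          exact hne hcy.symm
        have hdegx0 : m ≤ G.degree x0 := hdeg x0 hx0s
        have hnsub : G.neighborFinset x0
            ⊆ (range ((t+1)/2)).image (fun j => p.getVert (2*j+1)) := by
          intro y hy
          rw [mem_neighborFinset] at hy
          obtain ⟨i, hile, hiodd, hyi⟩ := hoddnbr y hy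
          rw [hlen] at hile
          refine mem_image.2 ⟨i / 2, mem_range.2 (by omega), ?_⟩
          rw [hyi]
          congr 1
          omega
        have hdub : m ≤ (t+1)/2 := by
          have h1 : G.degree x0 ≤ ((range ((t+1)/2)).image
              (fun j => p.getVert (2*j+1))).card := by
            rw [← card_neighborFinset_eq_degree]
            exact card_le_card hnsub
          have h2 : ((range ((t+1)/2)).image (fun j => p.getVert (2*j+1))).card
              ≤ (t+1)/2 := le_trans card_image_le (by simp)
          omega
        -- parity forces: ℓ = 2m+1 and t = 2m-1
        obtain ⟨hℓeq, hteq⟩ : ℓ = 2*m + 1 ∧ t + 1 = 2*m := by omega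
        -- x0 is adjacent to xt
        have hOddcard : ((range ((t+1)/2)).image (fun j => p.getVert (2*j+1))).card
            ≤ m := le_trans card_image_le (by simp; omega)
        have hneq : G.neighborFinset x0
            = (range ((t+1)/2)).image (fun j => p.getVert (2*j+1)) := by
          apply eq_of_subset_of_card_le hnsub
          rw [card_neighborFinset_eq_degree]
          omega
        have hadjxt : G.Adj x0 xt := by
          have hmem : xt ∈ (range ((t+1)/2)).image (fun j => p.getVert (2*j+1)) := by
            refine mem_image.2 ⟨m - 1, mem_range.2 (by omega), ?_⟩
            have h2 : 2*(m-1)+1 = p.length := by omega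
            rw [h2]
            exact p.getVert_length
          rw [← hneq, mem_neighborFinset] at hmem
          exact hmem
        -- the cycle
        have hedge : s(xt, x0) ∉ p.edges := by
          intro he
          obtain ⟨i, hi, hee⟩ := edges_getVert p _ he
          rw [Sym2.eq_iff] at hee
          rcases hee with ⟨h1, h2⟩ | ⟨h1, h2⟩
          · have : i = p.length := by
              apply getVert_injOn p hp i (by omega) p.length le_rfl
              rw [← h1, p.getVert_length]
            omega
          · have hi0 : i = 0 := by
              apply getVert_injOn p hp i (by omega) 0 (by omega)
              rw [← h2, p.getVert_zero]
            subst hi0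
            norm_num at h1
            have h3 : (1 : ℕ) = p.length := by
              apply getVert_injOn p hp 1 (by omega) p.length le_rfl
              rw [p.getVert_length]
              exact h1.symm
            omega
        set q := SimpleGraph.Walk.cons hadjxt.symm p with hqdef
        have hq : q.IsCycle :=
          (SimpleGraph.Walk.cons_isCycle_iff p hadjxt.symm).2 ⟨hp, hedge⟩
        have hqlen : q.length = t + 1 := by
          rw [hqdef, SimpleGraph.Walk.length_cons, hlen]
        -- all neighbors of support vertices are in the support
        have hclosed : ∀ x ∈ p.support, ∀ y, G.Adj x y → y ∈ p.support := by
          intro x hx y hxy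
          by_contra hyn
          have hxq : x ∈ q.support := by
            rw [hqdef, SimpleGraph.Walk.support_cons]
            exact List.mem_cons_of_mem _ hx
          have hq'c : (q.rotate x hxq).IsCycle := hq.rotate hxq
          have hnn : ¬ (q.rotate x hxq).Nil := hq'c.not_nil
          have hrt : (q.rotate x hxq).tail.IsPath := by
            rw [SimpleGraph.Walk.isPath_def, SimpleGraph.Walk.support_tail_of_not_nil _ hnn]
            exact ((SimpleGraph.Walk.isCycle_def _).1 hq'c).2.2
          have hsub' : ∀ z ∈ (q.rotate x hxq).tail.support, z ∈ p.support := by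
            intro z hz
            rw [SimpleGraph.Walk.support_tail_of_not_nil _ hnn] at hz
            have hz2 : z ∈ q.support.tail :=
              (SimpleGraph.Walk.support_rotate q x hxq).mem_iff.1 hz
            rw [hqdef, SimpleGraph.Walk.support_cons, List.tail_cons] at hz2
            exact hz2
          have hWpath : ((q.rotate x hxq).tail.concat hxy).IsPath := by
            rw [SimpleGraph.Walk.isPath_def, SimpleGraph.Walk.support_concat,
              List.nodup_append]
            refine ⟨(SimpleGraph.Walk.isPath_def _).1 hrt, List.nodup_singleton _, ?_⟩
            intro z hz z' hz2 hzz
            rw [List.mem_singleton] at hz2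
            subst hz2 hzz
            exact hyn (hsub' z hz)
          have hWlen : ((q.rotate x hxq).tail.concat hxy).length = t + 1 := by
            rw [SimpleGraph.Walk.length_concat]
            have := SimpleGraph.Walk.length_tail_add_one hnn
            rw [length_rotate q hxq, hqlen] at this
            omega
          refine hfree (contains_of_path _ hWpath ?_)
          rw [hWlen]
          omega
        -- the support set S
        set S := p.support.toFinset with hSdef
        have hScard : S.card = 2 * m := by
          rw [hSdef, List.toFinset_card_of_nodup hp.support_nodup,
            SimpleGraph.Walk.length_support]
          omega
        have hSs : S ⊆ s := by
          intro x hx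
          rw [hSdef, List.mem_toFinset] at hx
          obtain ⟨i, hgi, hile⟩ := SimpleGraph.Walk.mem_support_iff_exists_getVert.1 hx
          by_cases hi : i < p.length
          · have hadj := p.adj_getVert_succ hi
            rw [hgi] at hadj
            exact hs _ (mem_edgeFinset.2 ((mem_edgeSet G).2 hadj)) x (Sym2.mem_mk_left _ _)
          · have hieq : i = p.length := by omega
            have hadj := p.adj_getVert_succ (show p.length - 1 < p.length by omega)
            have h2 : p.length - 1 + 1 = i := by omega
            rw [h2, hgi] at hadj
            exact hs _ (mem_edgeFinset.2 ((mem_edgeSet G).2 hadj)) x (Sym2.mem_mk_right _ _)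
        -- the color classes on S
        set A := S.filter (fun x => c x = c x0) with hAdef
        have hAcard : A.card ≤ m := by
          have hsubA : A ⊆ (range m).image (fun j => p.getVert (2*j)) := by
            intro x hx
            rw [hAdef, mem_filter, hSdef, List.mem_toFinset] at hx
            obtain ⟨i, hgi, hile⟩ :=
              SimpleGraph.Walk.mem_support_iff_exists_getVert.1 hx.1
            have hcx := coloring_getVert c p i hile
            rw [hgi, hx.2] at hcx
            have hiz : (i : ZMod 2) = 0 := by
              rwa [left_eq_add] at hcx
            have hie : i % 2 = 0 := (zmod_two_cast_eq_zero_iff i).1 hiz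
            rw [hlen] at hile
            refine mem_image.2 ⟨i / 2, mem_range.2 (by omega), ?_⟩
            rw [← hgi]
            congr 1
            omega
          exact le_trans (card_le_card hsubA) (le_trans card_image_le (by simp))
        have hdegA : ∀ x ∈ A, G.degree x ≤ m := by
          intro x hx
          rw [hAdef, mem_filter, hSdef, List.mem_toFinset] at hx
          have hsub2 : G.neighborFinset x
              ⊆ (range m).image (fun j => p.getVert (2*j+1)) := by
            intro y hy
            rw [mem_neighborFinset] at hy
            obtain ⟨i, hgi, hile⟩ :=
              SimpleGraph.Walk.mem_support_iff_exists_getVert.1 (hclosed x hx.1 y hy)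
            have hcy := coloring_getVert c p i hile
            rw [hgi] at hcy
            have hne : c x ≠ c y := c.valid hy
            rw [hx.2] at hne
            have hio : i % 2 = 1 := by
              by_contra h2
              have h2' : i % 2 = 0 := by omega
              rw [(zmod_two_cast_eq_zero_iff i).2 h2', add_zero] at hcy
              exact hne hcy.symm
            rw [hlen] at hile
            refine mem_image.2 ⟨i / 2, mem_range.2 (by omega), ?_⟩
            rw [← hgi]
            congr 1
            omega
          calc G.degree x = (G.neighborFinset x).card :=
                (card_neighborFinset_eq_degree _ _).symm
            _ ≤ ((range m).image (fun j => p.getVert (2*j+1))).card := card_le_card hsub2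
            _ ≤ m := le_trans card_image_le (by simp)
        -- edges touching S
        have htouch : (G.edgeFinset.filter (fun e => ∃ x ∈ S, x ∈ e)).card ≤ m * m := by
          have hsub3 : G.edgeFinset.filter (fun e => ∃ x ∈ S, x ∈ e)
              ⊆ A.biUnion (fun v => G.incidenceFinset v) := by
            intro e he
            rw [mem_filter] at he
            obtain ⟨he1, x, hxS, hxe⟩ := he
            obtain ⟨y, rfl⟩ := Sym2.mem_iff_exists.1 hxe
            have hxy : G.Adj x y := (mem_edgeSet G).1 (mem_edgeFinset.1 he1)
            have hxp : x ∈ p.support := by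
              rw [hSdef, List.mem_toFinset] at hxS
              exact hxS
            have hyp : y ∈ p.support := hclosed x hxp y hxy
            have hone : c x = c x0 ∨ c y = c x0 := by
              have hne : c x ≠ c y := c.valid hxy
              revert hne
              generalize c x = u
              generalize c y = v
              generalize c x0 = z
              revert u v z; decide
            rcases hone with hcx | hcy
            · refine mem_biUnion.2 ⟨x, ?_, ?_⟩
              · rw [hAdef, mem_filter]
                exact ⟨by rw [hSdef, List.mem_toFinset]; exact hxp, hcx⟩
              · rw [mem_incidenceFinset]
                exact ⟨mem_edgeFinset.1 he1, Sym2.mem_mk_left _ _⟩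
            · refine mem_biUnion.2 ⟨y, ?_, ?_⟩
              · rw [hAdef, mem_filter]
                exact ⟨by rw [hSdef, List.mem_toFinset]; exact hyp, hcy⟩
              · rw [mem_incidenceFinset]
                exact ⟨mem_edgeFinset.1 he1, Sym2.mem_mk_right _ _⟩
          calc (G.edgeFinset.filter (fun e => ∃ x ∈ S, x ∈ e)).card
              ≤ (A.biUnion (fun v => G.incidenceFinset v)).card := card_le_card hsub3
            _ ≤ ∑ v ∈ A, (G.incidenceFinset v).card := card_biUnion_le
            _ ≤ ∑ v ∈ A, m := by
                apply sum_le_sum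
                intro v hv
                rw [card_incidenceFinset_eq_degree]
                exact hdegA v hv
            _ = A.card * m := by rw [sum_const, smul_eq_mul]
            _ ≤ m * m := Nat.mul_le_mul_right m hAcard
        -- recursion
        have hle := cut_le G S
        have hfree' : ¬ Contains (cut G S) (pathGraph ℓ) :=
          fun hc => hfree (contains_mono hle hc)
        have c' : (cut G S).Coloring (ZMod 2) := c.comp (Hom.ofLE hle)
        have hs' : ∀ e ∈ (cut G S).edgeFinset, ∀ x ∈ e, x ∈ s \ S := by
          intro e he x hx
          rw [cut_edgeFinset] at he; simp only [mem_filter] at he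
          refine mem_sdiff.2 ⟨hs e he.1 x hx, ?_⟩
          intro hxS
          exact he.2 ⟨x, hxS, hx⟩
        have h2ms : 2*m ≤ s.card := by
          rw [← hScard]
          exact card_le_card hSs
        have hcard' : (s \ S).card ≤ N := by
          rw [card_sdiff_of_subset hSs, hScard]
          omega
        have hrec := ih (cut G S) c' hfree' (s \ S) hcard' hs'
        rw [card_sdiff_of_subset hSs, hScard] at hrec
        have hsplit : G.edgeFinset.card = (G.edgeFinset.filter (fun e => ∃ x ∈ S, x ∈ e)).card + (cut G S).edgeFinset.card := by
          convert edge_split G S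
        have e2 : m*m ≤ (m-1)*(2*m) := by
          calc m*m ≤ (2*(m-1))*m := Nat.mul_le_mul_right m (by omega)
            _ = (m-1)*(2*m) := by ring
        have e1 : (m-1)*s.card = (m-1)*(s.card-2*m) + (m-1)*(2*m) := by
          rw [← Nat.mul_add]
          congr 1
          omega
        have := add_le_add htouch hrec
        omega

end StarPathForestAux

/-- **Lemma 3.1.** If `ℓ ≥ 4` and `G` is a `Pℓ`-free bipartite graph on `n` vertices,
then `e(G) ≤ (⌊ℓ/2⌋ - 1) n`. -/
theorem star_path_forest_stmt0 (ℓ n : ℕ) (hℓ : 4 ≤ ℓ) (G : SimpleGraph (Fin n))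
    [DecidableRel G.Adj] (hbip : G.Colorable 2)
    (hfree : ¬ Contains G (pathGraph ℓ)) :
    G.edgeFinset.card ≤ (ℓ / 2 - 1) * n := by
  have c : G.Coloring (ZMod 2) := hbip.some
  have h := StarPathForestAux.key ℓ hℓ n G c hfree Finset.univ
    (by simp) (fun e _ x _ => Finset.mem_univ x)
  simpa using h
end

section
/- Let k ≥ 0, ℓ ≥ 4, and let G be a bipartite graph on n vertices with n ≥ (k+⌊ℓ/2⌋-1)² - (k+⌊ℓ/2⌋-2)·ℓ + ℓ²k + ℓ² - ℓ that contains no subgraph isomorphic to the disjoint union of k copies of the star S_{ℓ-1} together with a path P_ℓ. Then e(G) ≤ (k + ⌊ℓ/2⌋ - 1)·n. -/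
open SimpleGraph Finset


/-- The star on `m` vertices with center `0` (so `m - 1` leaves), i.e. `S_{m-1}`. -/
def starGraph (m : ℕ) : SimpleGraph (Fin m) where
  Adj i j := i ≠ j ∧ ((i : ℕ) = 0 ∨ (j : ℕ) = 0)
  symm := ⟨fun i j h => ⟨h.1.symm, h.2.symm⟩⟩
  loopless := ⟨fun i h => h.1 rfl⟩

/-- `k` disjoint copies of a graph `G`. -/
def kCopies {α : Type*} (k : ℕ) (G : SimpleGraph α) : SimpleGraph (Fin k × α) where
  Adj x y := x.1 = y.1 ∧ G.Adj x.2 y.2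
  symm := ⟨fun x y h => ⟨h.1.symm, h.2.symm⟩⟩
  loopless := ⟨fun x h => G.irrefl h.2⟩

/-- The star-path forest `k·S_{ℓ-1} ∪ P_ℓ`. -/
def starPathForest (k ℓ : ℕ) : SimpleGraph (Fin k × Fin ℓ ⊕ Fin ℓ) :=
  kCopies k (starGraph ℓ) ⊕g pathGraph ℓ

variable {n : ℕ}

namespace SPF

variable (G : SimpleGraph (Fin n)) [DecidableRel G.Adj]

/-- The edges of `G` inside the vertex set `s`. -/
def einset (s : Finset (Fin n)) : Finset (Sym2 (Fin n)) :=
  G.edgeFinset.filter (fun e => ∀ x ∈ e, x ∈ s)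

/-- Number of edges of `G` inside `s`. -/
def ein (s : Finset (Fin n)) : ℕ := (einset G s).card

/-- Degree of `v` into `s`. -/
def degIn (s : Finset (Fin n)) (v : Fin n) : ℕ := (G.neighborFinset v ∩ s).card

lemma mem_einset {s : Finset (Fin n)} {a b : Fin n} :
    s(a, b) ∈ einset G s ↔ G.Adj a b ∧ a ∈ s ∧ b ∈ s := by
  simp only [einset, mem_filter, mem_edgeFinset, mem_edgeSet, Sym2.mem_iff]
  constructor
  · rintro ⟨h, h2⟩
    exact ⟨h, h2 a (Or.inl rfl), h2 b (Or.inr rfl)⟩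
  · rintro ⟨h, h2, h3⟩
    refine ⟨h, ?_⟩
    rintro x (rfl | rfl) <;> assumption

lemma twice_ein (s : Finset (Fin n)) : 2 * ein G s = ∑ v ∈ s, degIn G s v := by
  classical
  let Gs : SimpleGraph (Fin n) :=
    { Adj := fun a b => G.Adj a b ∧ a ∈ s ∧ b ∈ s
      symm := ⟨fun a b h => ⟨h.1.symm, h.2.2, h.2.1⟩⟩
      loopless := ⟨fun a h => G.irrefl h.1⟩ }
  have hdec : DecidableRel Gs.Adj := fun a b => instDecidableAnd
  have hedge : Gs.edgeFinset = einset G s := by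
    ext e
    induction e with
    | _ a b =>
      rw [mem_einset]
      simp [mem_edgeFinset, mem_edgeSet, Gs]
  have hdeg : ∀ v ∈ s, Gs.degree v = degIn G s v := by
    intro v hv
    unfold degIn
    rw [← card_neighborFinset_eq_degree]
    congr 1
    ext w
    simp [Gs, hv, and_comm]
  have hdeg0 : ∀ v, v ∉ s → Gs.degree v = 0 := by
    intro v hv
    rw [← card_neighborFinset_eq_degree, card_eq_zero]
    ext w
    simp only [mem_neighborFinset, notMem_empty, iff_false]
    intro h
    exact hv h.2.1
  have := Gs.sum_degrees_eq_twice_card_edges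
  have hsum : ∑ v, Gs.degree v = ∑ v ∈ s, degIn G s v := by
    rw [← Finset.sum_subset (subset_univ s)]
    · exact Finset.sum_congr rfl hdeg
    · intro x _ hx
      exact hdeg0 x hx
  rw [ein, ← hedge, ← hsum, this]


lemma card_incident_le (s : Finset (Fin n)) (w : Fin n) :
    ((einset G s).filter (fun e => w ∈ e)).card ≤ degIn G s w := by
  classical
  apply Finset.card_le_card_of_injOn (fun e => if h : w ∈ e then Sym2.Mem.other' h else w)
  · intro e he
    simp only [mem_coe, mem_filter] at he
    obtain ⟨hes, hwe⟩ := he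
    beta_reduce; rw [dif_pos hwe]
    have hspec := Sym2.other_spec' hwe
    rw [← hspec, mem_einset] at hes
    show _ ∈ G.neighborFinset w ∩ s
    rw [Finset.mem_inter, mem_neighborFinset]
    exact ⟨hes.1, hes.2.2⟩
  · intro e1 h1 e2 h2 heq
    simp only [mem_coe, mem_filter] at h1 h2
    simp only [] at heq
    rw [dif_pos h1.2, dif_pos h2.2] at heq
    rw [← Sym2.other_spec' h1.2, ← Sym2.other_spec' h2.2, heq]

lemma ein_le_sdiff (s W : Finset (Fin n)) :
    ein G s ≤ ein G (s \ W) + ∑ w ∈ W, degIn G s w := by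
  classical
  have hsub : einset G s ⊆ einset G (s \ W) ∪ W.biUnion (fun w => (einset G s).filter (fun e => w ∈ e)) := by
    intro e he
    by_cases hW : ∃ w ∈ W, w ∈ e
    · obtain ⟨w, hw, hwe⟩ := hW
      exact Finset.mem_union_right _ (Finset.mem_biUnion.mpr ⟨w, hw, Finset.mem_filter.mpr ⟨he, hwe⟩⟩)
    · push_neg at hW
      apply Finset.mem_union_left
      simp only [einset, mem_filter] at he ⊢
      refine ⟨he.1, fun x hx => Finset.mem_sdiff.mpr ⟨he.2 x hx, fun hxW => hW x hxW hx⟩⟩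
  calc ein G s ≤ (einset G (s \ W) ∪ W.biUnion (fun w => (einset G s).filter (fun e => w ∈ e))).card :=
        Finset.card_le_card hsub
    _ ≤ ein G (s \ W) + (W.biUnion (fun w => (einset G s).filter (fun e => w ∈ e))).card :=
        Finset.card_union_le _ _
    _ ≤ ein G (s \ W) + ∑ w ∈ W, degIn G s w := by
        gcongr
        exact le_trans (Finset.card_biUnion_le) (Finset.sum_le_sum (fun w _ => card_incident_le G s w))

lemma degIn_mono {s t : Finset (Fin n)} (hst : s ⊆ t) (v : Fin n) : degIn G s v ≤ degIn G t v :=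
  Finset.card_le_card (Finset.inter_subset_inter le_rfl hst)

lemma degIn_le_card (s : Finset (Fin n)) (v : Fin n) : degIn G s v ≤ s.card :=
  Finset.card_le_card (Finset.inter_subset_right)


/-- `H` has an injective homomorphic copy inside the vertex set `s`. -/
def ContainsOn (s : Finset (Fin n)) {β : Type} (H : SimpleGraph β) : Prop :=
  ∃ f : H →g G, Function.Injective f ∧ ∀ x, f x ∈ s

lemma ContainsOn.mono {s t : Finset (Fin n)} {β : Type} {H : SimpleGraph β}
    (h : ContainsOn G s H) (hst : s ⊆ t) : ContainsOn G t H := by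
  obtain ⟨f, hf, hfs⟩ := h
  exact ⟨f, hf, fun x => hst (hfs x)⟩

/-- A path in `G` within `s`, given by a vertex function. -/
def IsPathFun (s : Finset (Fin n)) (m : ℕ) (f : ℕ → Fin n) : Prop :=
  (∀ i ≤ m, f i ∈ s) ∧ (∀ i < m, G.Adj (f i) (f (i+1))) ∧
  (∀ i ≤ m, ∀ j ≤ m, f i = f j → i = j)

lemma IsPathFun.reverse {s : Finset (Fin n)} {m : ℕ} {f : ℕ → Fin n}
    (h : IsPathFun G s m f) : IsPathFun G s m (fun t => f (m - t)) := by
  obtain ⟨hmem, hadj, hinj⟩ := h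
  refine ⟨fun i hi => hmem _ (Nat.sub_le _ _), fun i hi => ?_, fun i hi j hj hij => ?_⟩
  · have h1 : m - (i+1) < m := by omega
    have h2 : m - (i+1) + 1 = m - i := by omega
    have := hadj (m - (i+1)) h1
    rw [h2] at this
    exact this.symm
  · have := hinj _ (Nat.sub_le _ _) _ (Nat.sub_le _ _) hij
    omega

lemma IsPathFun.card_le {s : Finset (Fin n)} {m : ℕ} {f : ℕ → Fin n}
    (h : IsPathFun G s m f) : m + 1 ≤ s.card := by
  obtain ⟨hmem, hadj, hinj⟩ := h
  have : ((Finset.range (m+1)).image f).card = m + 1 := by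
    rw [Finset.card_image_of_injOn, Finset.card_range]
    intro i hi j hj hij
    simp only [coe_range, Set.mem_Iio, Finset.mem_range] at hi hj
    exact hinj i (by omega) j (by omega) hij
  rw [← this]
  apply Finset.card_le_card
  intro x hx
  simp only [Finset.mem_image, Finset.mem_range] at hx
  obtain ⟨i, hi, rfl⟩ := hx
  exact hmem i (by omega)

lemma exists_max_path {s : Finset (Fin n)} (hs : s.Nonempty) :
    ∃ (M : ℕ) (f : ℕ → Fin n), IsPathFun G s M f ∧
      ∀ m' f', IsPathFun G s m' f' → m' ≤ M := by
  classical
  set T : Set ℕ := {m | ∃ f, IsPathFun G s m f} with hT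
  have hne : T.Nonempty := by
    obtain ⟨v, hv⟩ := hs
    exact ⟨0, fun _ => v, fun i _ => hv, fun i hi => absurd hi (by omega),
      fun i hi j hj _ => by omega⟩
  have hbdd : BddAbove T := by
    refine ⟨s.card, fun m hm => ?_⟩
    obtain ⟨f, hf⟩ := hm
    have := hf.card_le (G := G)
    omega
  have hmem := Nat.sSup_mem hne hbdd
  obtain ⟨f, hf⟩ := hmem
  exact ⟨sSup T, f, hf, fun m' f' h' => le_csSup hbdd ⟨f', h'⟩⟩

lemma fin2_eq_of_ne {a b c : Fin 2} (h1 : a ≠ b) (h2 : c ≠ b) : a = c := by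
  fin_cases a <;> fin_cases b <;> fin_cases c <;> simp_all

lemma parity_color {s : Finset (Fin n)} {m : ℕ} {f : ℕ → Fin n} {C : Fin n → Fin 2}
    (hC : ∀ {a b}, G.Adj a b → C a ≠ C b)
    (h : IsPathFun G s m f) : ∀ i ≤ m, (C (f i) = C (f 0) ↔ i % 2 = 0) := by
  intro i
  induction i with
  | zero => simp
  | succ i ih =>
    intro hi
    have hne : C (f (i+1)) ≠ C (f i) := (hC (h.2.1 i (by omega))).symm
    have ihi := ih (by omega)
    rcases Nat.even_or_odd i with he | ho
    · have hi0 : i % 2 = 0 := Nat.even_iff.mp he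
      have : C (f i) = C (f 0) := ihi.mpr hi0
      rw [← this]
      constructor
      · intro hcon; exact absurd hcon hne
      · omega
    · have hi1 : i % 2 = 1 := Nat.odd_iff.mp ho
      have hne0 : C (f i) ≠ C (f 0) := by
        intro hcon
        have := ihi.mp hcon
        omega
      constructor
      · intro _; omega
      · intro _
        exact fin2_eq_of_ne hne (Ne.symm hne0)

lemma card_filter_odd (m : ℕ) : ((Finset.range m).filter (fun j => j % 2 = 1)).card = m / 2 := by
  induction m with
  | zero => simp
  | succ m ih =>
    rw [Finset.range_add_one, Finset.filter_insert]
    by_cases h : m % 2 = 1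
    · rw [if_pos h, Finset.card_insert_of_notMem (by simp), ih]
      omega
    · rw [if_neg h, ih]
      omega


lemma containsOn_path_of_pathFun {ℓ : ℕ} (hℓ : 1 ≤ ℓ) {s : Finset (Fin n)} {m : ℕ}
    {f : ℕ → Fin n} (hpf : IsPathFun G s m f) (hm : ℓ - 1 ≤ m) :
    ContainsOn G s (pathGraph ℓ) := by
  obtain ⟨hmem, hadj, hinj⟩ := hpf
  refine ⟨⟨fun i => f i.val, ?_⟩, ?_, ?_⟩
  · intro a b hab
    rw [pathGraph_adj] at hab
    rcases hab with hab | hab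
    · have : a.val < m := by omega
      have := hadj a.val this
      rwa [hab] at this
    · have : b.val < m := by omega
      have := hadj b.val this
      rw [hab] at this
      exact this.symm
  · intro a b hab
    exact Fin.ext (hinj a.val (by omega) b.val (by omega) hab)
  · intro x
    exact hmem x.val (by omega)

lemma neighbors_in_support {s : Finset (Fin n)} {M : ℕ} {f : ℕ → Fin n}
    (hpf : IsPathFun G s M f)
    (hmax : ∀ m' f', IsPathFun G s m' f' → m' ≤ M) {w : Fin n}
    (hw : G.Adj (f 0) w) (hws : w ∈ s) : ∃ j, j ≤ M ∧ w = f j := by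
  by_contra hcon
  push_neg at hcon
  obtain ⟨hmem, hadj, hinj⟩ := hpf
  set g : ℕ → Fin n := fun t => if t = 0 then w else f (t - 1) with hg
  have hpg : IsPathFun G s (M + 1) g := by
    refine ⟨fun i hi => ?_, fun i hi => ?_, fun i hi j hj hij => ?_⟩
    · by_cases h0 : i = 0
      · simp [hg, h0, hws]
      · simp only [hg, if_neg h0]
        exact hmem _ (by omega)
    · by_cases h0 : i = 0
      · subst h0
        simp only [hg, if_pos rfl, if_neg (by omega : ¬ (0:ℕ)+1 = 0)]
        exact hw.symm
      · simp only [hg, if_neg h0, if_neg (by omega : ¬ i+1 = 0)]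
        have : i - 1 + 1 = i + 1 - 1 := by omega
        rw [this] at *
        have := hadj (i-1) (by omega)
        have heq : i - 1 + 1 = i + 1 - 1 := by omega
        rw [heq] at this
        exact this
    · by_cases h0 : i = 0 <;> by_cases h0' : j = 0
      · omega
      · exfalso
        simp only [hg, if_pos h0, if_neg h0'] at hij
        exact hcon (j-1) (by omega) hij
      · exfalso
        simp only [hg, if_neg h0, if_pos h0'] at hij
        exact hcon (i-1) (by omega) hij.symm
      · simp only [hg, if_neg h0, if_neg h0'] at hij
        have := hinj (i-1) (by omega) (j-1) (by omega) hij
        omega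
  have := hmax _ _ hpg
  omega

lemma endpoint_adj {ℓ : ℕ} (hℓ : 4 ≤ ℓ) {s : Finset (Fin n)} {M : ℕ} {f : ℕ → Fin n}
    (hfree : ¬ ContainsOn G s (pathGraph ℓ))
    (hmin : ∀ v ∈ s, ℓ / 2 ≤ degIn G s v)
    {C : Fin n → Fin 2} (hC : ∀ {a b}, G.Adj a b → C a ≠ C b)
    (hpf : IsPathFun G s M f)
    (hmax : ∀ m' f', IsPathFun G s m' f' → m' ≤ M) :
    M = 2 * (ℓ / 2) - 1 ∧ ℓ = 2 * (ℓ / 2) + 1 ∧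
      ∀ j ≤ M, j % 2 = 1 → G.Adj (f 0) (f j) := by
  set h : ℕ := ℓ / 2 with hh
  have hM2 : M ≤ ℓ - 2 := by
    by_contra hcon
    exact hfree (containsOn_path_of_pathFun G (by omega) hpf (by omega))
  set N : Finset (Fin n) := G.neighborFinset (f 0) ∩ s with hN
  set B : Finset (Fin n) := ((Finset.range (M+1)).filter (fun j => j % 2 = 1)).image f with hB
  have hNB : N ⊆ B := by
    intro w hw
    rw [hN, Finset.mem_inter, mem_neighborFinset] at hw
    obtain ⟨j, hj, rfl⟩ := neighbors_in_support G hpf hmax hw.1 hw.2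
    have hpar := (parity_color G hC hpf j hj)
    have hne : C (f j) ≠ C (f 0) := (hC hw.1).symm
    have hodd : j % 2 = 1 := by
      rcases Nat.even_or_odd j with he | ho
      · exact absurd (hpar.mpr (Nat.even_iff.mp he)) hne
      · exact Nat.odd_iff.mp ho
    rw [hB]
    exact Finset.mem_image.mpr ⟨j, Finset.mem_filter.mpr ⟨Finset.mem_range.mpr (by omega), hodd⟩, rfl⟩
  have hcardB : B.card ≤ (M+1) / 2 := by
    calc B.card ≤ ((Finset.range (M+1)).filter (fun j => j % 2 = 1)).card := Finset.card_image_le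
      _ = (M+1) / 2 := card_filter_odd _
  have hf0s : f 0 ∈ s := hpf.1 0 (by omega)
  have hcardN : h ≤ N.card := hmin _ hf0s
  have hMlow : 2 * h - 1 ≤ M := by
    have := Finset.card_le_card hNB
    have hh2 : 2 ≤ h := by omega
    omega
  have hM : M = 2 * h - 1 := by omega
  have hℓodd : ℓ = 2 * h + 1 := by omega
  refine ⟨hM, hℓodd, ?_⟩
  have hNeqB : N = B := by
    apply Finset.eq_of_subset_of_card_le hNB
    omega
  intro j hj hodd
  have : f j ∈ B := Finset.mem_image.mpr
    ⟨j, Finset.mem_filter.mpr ⟨Finset.mem_range.mpr (by omega), hodd⟩, rfl⟩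
  rw [← hNeqB, hN, Finset.mem_inter, mem_neighborFinset] at this
  exact this.1

lemma rotation_even {ℓ : ℕ} (hℓ : 4 ≤ ℓ) {s : Finset (Fin n)} {M : ℕ} {f : ℕ → Fin n}
    (hfree : ¬ ContainsOn G s (pathGraph ℓ))
    (hmin : ∀ v ∈ s, ℓ / 2 ≤ degIn G s v)
    {C : Fin n → Fin 2} (hC : ∀ {a b}, G.Adj a b → C a ≠ C b)
    (hpf : IsPathFun G s M f)
    (hmax : ∀ m' f', IsPathFun G s m' f' → m' ≤ M)
    {i : ℕ} (hi : i ≤ M) (hieven : i % 2 = 0) {w : Fin n}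
    (hw : G.Adj (f i) w) (hws : w ∈ s)
    (hwim : w ∉ (Finset.range (M+1)).image f) : False := by
  obtain ⟨hM, hlodd, hadjodd⟩ := endpoint_adj G hℓ hfree hmin hC hpf hmax
  have hh2 : 2 ≤ ℓ / 2 := by omega
  have hiM : i < M := by omega
  obtain ⟨hmem, hadj, hinj⟩ := hpf
  have hwim' : ∀ j ≤ M, w ≠ f j := by
    intro j hj hcon
    exact hwim (Finset.mem_image.mpr ⟨j, Finset.mem_range.mpr (by omega), hcon.symm⟩)
  set g : ℕ → Fin n := fun t => if t = 0 then w else if t ≤ i + 1 then f (i + 1 - t) else f (t - 1)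
    with hg
  have hpg : IsPathFun G s (M + 1) g := by
    refine ⟨fun t ht => ?_, fun t ht => ?_, fun t ht t' ht' htt => ?_⟩
    · by_cases h0 : t = 0
      · simpa [hg, h0] using hws
      · by_cases h1 : t ≤ i + 1
        · simp only [hg, if_neg h0, if_pos h1]
          exact hmem _ (by omega)
        · simp only [hg, if_neg h0, if_neg h1]
          exact hmem _ (by omega)
    · rcases Nat.lt_or_ge t 1 with h0 | h0
      · have ht0 : t = 0 := by omega
        subst ht0
        simp only [hg, if_pos rfl, if_neg (by omega : ¬(0:ℕ)+1 = 0),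
          if_pos (by omega : (0:ℕ)+1 ≤ i+1)]
        have e0 : i + 1 - 1 = i := by omega
        rw [e0]
        exact hw.symm
      · rcases Nat.lt_or_ge t (i+1) with h1 | h1
        · simp only [hg, if_neg (by omega : ¬t = 0), if_pos (by omega : t ≤ i+1),
            if_neg (by omega : ¬t+1 = 0), if_pos (by omega : t+1 ≤ i+1)]
          have e1 : i + 1 - t = (i - t) + 1 := by omega
          have e2 : i + 1 - (t + 1) = i - t := by omega
          rw [e1, e2]
          exact (hadj (i - t) (by omega)).symm
        · rcases Nat.eq_or_lt_of_le h1 with h2 | h2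
          · have ht1 : t = i + 1 := by omega
            subst ht1
            simp only [hg, if_neg (by omega : ¬i+1 = 0), if_pos (le_refl (i+1)),
              if_neg (by omega : ¬i+1+1 = 0), if_neg (by omega : ¬i+1+1 ≤ i+1)]
            have e1 : i + 1 - (i + 1) = 0 := by omega
            have e2 : i + 1 + 1 - 1 = i + 1 := by omega
            rw [e1, e2]
            exact hadjodd (i+1) (by omega) (by omega)
          · simp only [hg, if_neg (by omega : ¬t = 0), if_neg (by omega : ¬t ≤ i+1),
              if_neg (by omega : ¬t+1 = 0), if_neg (by omega : ¬t+1 ≤ i+1)]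
            have e1 : t + 1 - 1 = (t - 1) + 1 := by omega
            rw [e1]
            exact hadj (t - 1) (by omega)
    · by_cases h0 : t = 0 <;> by_cases h0' : t' = 0
      · omega
      · exfalso
        by_cases h1 : t' ≤ i + 1
        · simp only [hg, if_pos h0, if_neg h0', if_pos h1] at htt
          exact hwim' _ (by omega) htt
        · simp only [hg, if_pos h0, if_neg h0', if_neg h1] at htt
          exact hwim' _ (by omega) htt
      · exfalso
        by_cases h1 : t ≤ i + 1
        · simp only [hg, if_neg h0, if_pos h0', if_pos h1] at htt
          exact hwim' _ (by omega) htt.symm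
        · simp only [hg, if_neg h0, if_pos h0', if_neg h1] at htt
          exact hwim' _ (by omega) htt.symm
      · by_cases h1 : t ≤ i + 1 <;> by_cases h1' : t' ≤ i + 1
        · simp only [hg, if_neg h0, if_pos h1, if_neg h0', if_pos h1'] at htt
          have := hinj _ (by omega) _ (by omega) htt
          omega
        · simp only [hg, if_neg h0, if_pos h1, if_neg h0', if_neg h1'] at htt
          have := hinj _ (by omega) _ (by omega) htt
          omega
        · simp only [hg, if_neg h0, if_neg h1, if_neg h0', if_pos h1'] at htt
          have := hinj _ (by omega) _ (by omega) htt
          omega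
        · simp only [hg, if_neg h0, if_neg h1, if_neg h0', if_neg h1'] at htt
          have := hinj _ (by omega) _ (by omega) htt
          omega
  have := hmax _ _ hpg
  omega

lemma closure {ℓ : ℕ} (hℓ : 4 ≤ ℓ) {s : Finset (Fin n)} {M : ℕ} {f : ℕ → Fin n}
    (hfree : ¬ ContainsOn G s (pathGraph ℓ))
    (hmin : ∀ v ∈ s, ℓ / 2 ≤ degIn G s v)
    {C : Fin n → Fin 2} (hC : ∀ {a b}, G.Adj a b → C a ≠ C b)
    (hpf : IsPathFun G s M f)
    (hmax : ∀ m' f', IsPathFun G s m' f' → m' ≤ M)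
    {i : ℕ} (hi : i ≤ M) {w : Fin n}
    (hw : G.Adj (f i) w) (hws : w ∈ s) : w ∈ (Finset.range (M+1)).image f := by
  by_contra hwim
  rcases Nat.even_or_odd i with he | ho
  · exact rotation_even G hℓ hfree hmin hC hpf hmax hi (Nat.even_iff.mp he) hw hws hwim
  · obtain ⟨hM, hlodd, -⟩ := endpoint_adj G hℓ hfree hmin hC hpf hmax
    have hh2 : 2 ≤ ℓ / 2 := by omega
    set f' : ℕ → Fin n := fun t => f (M - t) with hf'
    have hpf' : IsPathFun G s M f' := hpf.reverse G
    have him : ((Finset.range (M+1)).image f' : Finset (Fin n)) = (Finset.range (M+1)).image f := by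
      ext x
      simp only [Finset.mem_image, Finset.mem_range, hf']
      constructor
      · rintro ⟨j, hj, rfl⟩
        exact ⟨M - j, by omega, rfl⟩
      · rintro ⟨j, hj, rfl⟩
        exact ⟨M - j, by omega, by congr 1; omega⟩
    have hieq : f' (M - i) = f i := by
      simp only [hf']
      congr 1
      omega
    have hima : w ∉ (Finset.range (M+1)).image f' := by
      rw [him]; exact hwim
    have hio : i % 2 = 1 := Nat.odd_iff.mp ho
    apply rotation_even G hℓ hfree hmin hC hpf' hmax (i := M - i) (by omega)
      (by omega) (by rw [hieq]; exact hw) hws hima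

lemma card_filter_even (m : ℕ) :
    ((Finset.range m).filter (fun j => j % 2 = 0)).card = (m + 1) / 2 := by
  induction m with
  | zero => simp
  | succ m ih =>
    rw [Finset.range_add_one, Finset.filter_insert]
    by_cases h : m % 2 = 0
    · rw [if_pos h, Finset.card_insert_of_notMem (by simp), ih]
      omega
    · rw [if_neg h, ih]
      omega

lemma einset_empty : einset G ∅ = ∅ := by
  ext e
  induction e with
  | _ a b =>
    rw [mem_einset]
    simp

lemma base_lemma {ℓ : ℕ} (hℓ : 4 ≤ ℓ) {C : Fin n → Fin 2}
    (hC : ∀ {a b}, G.Adj a b → C a ≠ C b) :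
    ∀ cs : ℕ, ∀ s : Finset (Fin n), s.card = cs →
      ¬ ContainsOn G s (pathGraph ℓ) → ein G s ≤ (ℓ / 2 - 1) * cs := by
  intro cs
  induction cs using Nat.strong_induction_on with
  | _ cs IH =>
    intro s hcs hfree
    have hh2 : 2 ≤ ℓ / 2 := by omega
    by_cases hex : ∃ v ∈ s, degIn G s v ≤ ℓ / 2 - 1
    · obtain ⟨v, hv, hdv⟩ := hex
      have hcs1 : 1 ≤ cs := by
        rw [← hcs]
        exact Finset.card_pos.mpr ⟨v, hv⟩
      have h1 : ein G s ≤ ein G (s \ {v}) + ∑ w ∈ {v}, degIn G s w := ein_le_sdiff G s {v}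
      rw [Finset.sum_singleton] at h1
      have hcard : (s \ {v}).card = cs - 1 := by
        rw [Finset.card_sdiff_of_subset (Finset.singleton_subset_iff.mpr hv), hcs, Finset.card_singleton]
      have h2 := IH (cs - 1) (by omega) (s \ {v}) hcard
        (fun hcon => hfree (hcon.mono G Finset.sdiff_subset))
      have : (ℓ / 2 - 1) * (cs - 1) + (ℓ / 2 - 1) = (ℓ / 2 - 1) * cs := by
        obtain ⟨c, rfl⟩ : ∃ c, cs = c + 1 := ⟨cs - 1, by omega⟩
        simp [Nat.mul_succ]
      omega
    · push_neg at hex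
      have hmin : ∀ v ∈ s, ℓ / 2 ≤ degIn G s v := by
        intro v hv
        have := hex v hv
        omega
      rcases Finset.eq_empty_or_nonempty s with rfl | hne
      · simp only [Finset.card_empty] at hcs
        rw [ein, einset_empty]
        simp [← hcs]
      · obtain ⟨M, f, hpf, hmax⟩ := exists_max_path G hne
        obtain ⟨hM, hlodd, hadjodd⟩ := endpoint_adj G hℓ hfree hmin hC hpf hmax
        set h' : ℕ := ℓ / 2 with hh'
        set S : Finset (Fin n) := (Finset.range (M+1)).image f with hS
        have hSs : S ⊆ s := by
          intro x hx
          obtain ⟨j, hj, rfl⟩ := Finset.mem_image.mp hx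
          exact hpf.1 j (by simp only [Finset.mem_range] at hj; omega)
        have hinjf := hpf.2.2
        have hcardS : S.card = M + 1 := by
          rw [hS, Finset.card_image_of_injOn, Finset.card_range]
          intro a ha b hb hab
          simp only [coe_range, Set.mem_Iio] at ha hb
          exact hinjf a (by omega) b (by omega) hab
        have hsplit : einset G s ⊆ einset G S ∪ einset G (s \ S) := by
          intro e he
          induction e with
          | _ a b =>
            rw [mem_einset] at he
            obtain ⟨hab, ha, hb⟩ := he
            by_cases haS : a ∈ S
            · obtain ⟨i, hi, rfl⟩ := Finset.mem_image.mp haS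
              simp only [Finset.mem_range] at hi
              have hbS : b ∈ S :=
                closure G hℓ hfree hmin hC hpf hmax (by omega : i ≤ M) hab hb
              exact Finset.mem_union_left _ ((mem_einset G).mpr ⟨hab, haS, hbS⟩)
            · by_cases hbS : b ∈ S
              · obtain ⟨i, hi, rfl⟩ := Finset.mem_image.mp hbS
                simp only [Finset.mem_range] at hi
                have haS' : a ∈ S :=
                  closure G hℓ hfree hmin hC hpf hmax (by omega : i ≤ M) hab.symm ha
                exact absurd haS' haS
              · exact Finset.mem_union_right _ ((mem_einset G).mpr
                  ⟨hab, Finset.mem_sdiff.mpr ⟨ha, haS⟩, Finset.mem_sdiff.mpr ⟨hb, hbS⟩⟩)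
        have hdegS : ∀ v ∈ S, degIn G S v ≤ h' := by
          intro v hvS
          obtain ⟨i, hi, rfl⟩ := Finset.mem_image.mp hvS
          simp only [Finset.mem_range] at hi
          have key : G.neighborFinset (f i) ∩ S ⊆
              ((Finset.range (M+1)).filter (fun j => j % 2 = 1 - i % 2)).image f := by
            intro x hx
            rw [Finset.mem_inter, mem_neighborFinset] at hx
            obtain ⟨hadjx, hxS⟩ := hx
            obtain ⟨j, hj, rfl⟩ := Finset.mem_image.mp hxS
            simp only [Finset.mem_range] at hj
            have hcne : C (f j) ≠ C (f i) := (hC hadjx).symm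
            have hpi := parity_color G hC hpf i (by omega)
            have hpj := parity_color G hC hpf j (by omega)
            have hne : j % 2 ≠ i % 2 := by
              intro hcon
              rcases Nat.even_or_odd i with he | ho
              · have hi0 := Nat.even_iff.mp he
                exact hcne ((hpj.mpr (by omega)).trans (hpi.mpr hi0).symm)
              · have hi1 := Nat.odd_iff.mp ho
                have h1 : C (f j) ≠ C (f 0) := fun hcon2 => by
                  have := hpj.mp hcon2; omega
                have h2 : C (f i) ≠ C (f 0) := fun hcon2 => by
                  have := hpi.mp hcon2; omega
                exact hcne (fin2_eq_of_ne h1 h2)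
            exact Finset.mem_image.mpr ⟨j, Finset.mem_filter.mpr
              ⟨Finset.mem_range.mpr (by omega), by omega⟩, rfl⟩
          calc degIn G S (f i) ≤ _ := Finset.card_le_card key
            _ ≤ ((Finset.range (M+1)).filter (fun j => j % 2 = 1 - i % 2)).card :=
              Finset.card_image_le
            _ ≤ h' := by
              rcases Nat.even_or_odd i with he | ho
              · have hi0 := Nat.even_iff.mp he
                have heq : ((Finset.range (M+1)).filter (fun j => j % 2 = 1 - i % 2)) =
                    ((Finset.range (M+1)).filter (fun j => j % 2 = 1)) := by
                  apply Finset.filter_congr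
                  intro j _
                  simp [hi0]
                rw [heq, card_filter_odd]
                omega
              · have hi1 := Nat.odd_iff.mp ho
                have heq : ((Finset.range (M+1)).filter (fun j => j % 2 = 1 - i % 2)) =
                    ((Finset.range (M+1)).filter (fun j => j % 2 = 0)) := by
                  apply Finset.filter_congr
                  intro j _
                  simp [hi1]
                rw [heq, card_filter_even]
                omega
        have h2einS : 2 * ein G S ≤ 2 * (h' * h') := by
          rw [twice_ein]
          calc ∑ v ∈ S, degIn G S v ≤ ∑ _v ∈ S, h' := Finset.sum_le_sum hdegS
            _ = (M + 1) * h' := by rw [Finset.sum_const, hcardS, smul_eq_mul]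
            _ = 2 * (h' * h') := by
                have : M + 1 = 2 * h' := by omega
                rw [this]
                ring
        have heinS : ein G S ≤ h' * h' := by omega
        have hcsS : M + 1 ≤ cs := by
          rw [← hcs, ← hcardS]
          exact Finset.card_le_card hSs
        have hcard2 : (s \ S).card = cs - (M + 1) := by
          rw [Finset.card_sdiff_of_subset hSs, hcs, hcardS]
        have hrec := IH (cs - (M+1)) (by omega) (s \ S) hcard2
          (fun hcon => hfree (hcon.mono G Finset.sdiff_subset))
        have htot : ein G s ≤ ein G S + ein G (s \ S) :=
          le_trans (Finset.card_le_card hsplit) (Finset.card_union_le _ _)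
        -- final arithmetic
        obtain ⟨u, hu⟩ : ∃ u, h' = u + 2 := ⟨h' - 2, by omega⟩
        obtain ⟨d, hd⟩ : ∃ d, cs = 2 * h' + d := ⟨cs - 2*h', by omega⟩
        have hfin : h' * h' + (h' - 1) * (cs - (M+1)) ≤ (h' - 1) * cs := by
          have e1 : cs - (M+1) = d := by omega
          have e2 : h' - 1 = u + 1 := by omega
          rw [e1, e2, hd, hu]
          nlinarith
        omega

lemma spf_zero {ℓ : ℕ} {s : Finset (Fin n)}
    (h : ¬ ContainsOn G s (starPathForest 0 ℓ)) : ¬ ContainsOn G s (pathGraph ℓ) := by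
  rintro ⟨f, hinj, hs⟩
  apply h
  refine ⟨⟨Sum.elim (fun p => p.1.elim0) (fun j => f j), ?_⟩, ?_, ?_⟩
  · intro a b hab
    rcases a with p | j
    · exact p.1.elim0
    · rcases b with q | j'
      · exact q.1.elim0
      · exact f.map_rel hab
  · intro a b hab
    rcases a with p | j
    · exact p.1.elim0
    · rcases b with q | j'
      · exact q.1.elim0
      · exact congrArg Sum.inr (hinj hab)
  · intro x
    rcases x with p | j
    · exact p.1.elim0
    · exact hs j

lemma extend_star {k ℓ : ℕ} (hℓ : 4 ≤ ℓ) {s : Finset (Fin n)} {v : Fin n} (hv : v ∈ s)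
    {T : Finset (Fin n)} (hT : T ⊆ G.neighborFinset v ∩ s) (hTcard : T.card = ℓ - 1)
    (f : starPathForest k ℓ →g G) (hfinj : Function.Injective f) (hfs : ∀ x, f x ∈ s)
    (hdisj : ∀ x, f x ≠ v ∧ f x ∉ T) :
    ContainsOn G s (starPathForest (k+1) ℓ) := by
  classical
  have hTv : v ∉ T := fun hcon =>
    (G.notMem_neighborFinset_self v) (Finset.mem_inter.mp (hT hcon)).1
  set e := T.equivFin with he
  set tf : Fin (ℓ-1) → Fin n := fun j => (e.symm (Fin.cast hTcard.symm j) : Fin n) with htf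
  have htfT : ∀ j, tf j ∈ T := fun j => (e.symm (Fin.cast hTcard.symm j)).2
  have htfinj : Function.Injective tf := by
    intro a b hab
    have h1 : e.symm (Fin.cast hTcard.symm a) = e.symm (Fin.cast hTcard.symm b) :=
      Subtype.coe_injective hab
    have h2 := e.symm.injective h1
    rw [Fin.ext_iff] at h2 ⊢
    exact h2
  have htfadj : ∀ j, G.Adj v (tf j) := fun j =>
    (mem_neighborFinset G v _).mp (Finset.mem_inter.mp (hT (htfT j))).1
  have htfs : ∀ j, tf j ∈ s := fun j => (Finset.mem_inter.mp (hT (htfT j))).2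
  have htfv : ∀ j, tf j ≠ v := fun j hcon => hTv (hcon ▸ htfT j)
  set starV : Fin ℓ → Fin n := fun j =>
    if (j : ℕ) = 0 then v else tf ⟨(j : ℕ) - 1, by have := j.isLt; omega⟩ with hstarV
  have hstarVs : ∀ j, starV j ∈ s := by
    intro j
    by_cases h0 : (j : ℕ) = 0
    · simp only [hstarV, if_pos h0]; exact hv
    · simp only [hstarV, if_neg h0]; exact htfs _
  have hstarVT : ∀ j, starV j = v ∨ starV j ∈ T := by
    intro j
    by_cases h0 : (j : ℕ) = 0
    · left; simp only [hstarV, if_pos h0]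
    · right; simp only [hstarV, if_neg h0]; exact htfT _
  have hstarVinj : Function.Injective starV := by
    intro a b hab
    by_cases h0 : (a : ℕ) = 0 <;> by_cases h0' : (b : ℕ) = 0
    · exact Fin.ext (by omega)
    · exfalso
      simp only [hstarV, if_pos h0, if_neg h0'] at hab
      exact htfv _ hab.symm
    · exfalso
      simp only [hstarV, if_neg h0, if_pos h0'] at hab
      exact htfv _ hab
    · simp only [hstarV, if_neg h0, if_neg h0'] at hab
      have := htfinj hab
      rw [Fin.ext_iff] at this ⊢
      simp only at this
      have ha := a.isLt
      have hb := b.isLt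
      omega
  set F : (Fin (k+1) × Fin ℓ ⊕ Fin ℓ) → Fin n :=
    Sum.elim (fun p => if hik : (p.1 : ℕ) < k then f (Sum.inl (⟨(p.1 : ℕ), hik⟩, p.2))
      else starV p.2) (fun j => f (Sum.inr j)) with hF
  have hFinl_lt : ∀ (p : Fin (k+1) × Fin ℓ) (hik : (p.1 : ℕ) < k),
      F (Sum.inl p) = f (Sum.inl (⟨(p.1 : ℕ), hik⟩, p.2)) := by
    intro p hik
    simp only [hF, Sum.elim_inl, dif_pos hik]
  have hFinl_ge : ∀ (p : Fin (k+1) × Fin ℓ), ¬ (p.1 : ℕ) < k →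
      F (Sum.inl p) = starV p.2 := by
    intro p hik
    simp only [hF, Sum.elim_inl, dif_neg hik]
  refine ⟨⟨F, ?_⟩, ?_, ?_⟩
  · -- homomorphism
    intro a b hab
    rcases a with p | j
    · rcases b with q | j'
      · have hab' : p.1 = q.1 ∧ (_root_.starGraph ℓ).Adj p.2 q.2 := hab
        obtain ⟨hpq, hstar⟩ := hab'
        have hstar' : p.2 ≠ q.2 ∧ ((p.2 : ℕ) = 0 ∨ (q.2 : ℕ) = 0) := hstar
        by_cases hik : (p.1 : ℕ) < k
        · have hik' : (q.1 : ℕ) < k := by rw [← hpq]; exact hik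
          rw [hFinl_lt p hik, hFinl_lt q hik']
          have hvv : (p.1 : ℕ) = (q.1 : ℕ) := by rw [hpq]
          exact f.map_rel (And.intro (Fin.ext hvv) hstar)
        · have hik' : ¬ (q.1 : ℕ) < k := by rw [← hpq]; exact hik
          rw [hFinl_ge p hik, hFinl_ge q hik']
          rcases hstar'.2 with h0 | h0
          · have h0' : (q.2 : ℕ) ≠ 0 := by
              intro hcon
              exact hstar'.1 (Fin.ext (by omega))
            simp only [hstarV, if_pos h0, if_neg h0']
            exact htfadj _
          · have h0' : (p.2 : ℕ) ≠ 0 := by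
              intro hcon
              exact hstar'.1 (Fin.ext (by omega))
            simp only [hstarV, if_neg h0', if_pos h0]
            exact (htfadj _).symm
      · exact (Bool.false_ne_true hab).elim
    · rcases b with q | j'
      · exact (Bool.false_ne_true hab).elim
      · exact f.map_rel hab
  · -- injective
    intro a b hab0
    have hab : F a = F b := hab0
    clear hab0
    rcases a with p | j
    · rcases b with q | j'
      · by_cases hik : (p.1 : ℕ) < k <;> by_cases hik' : (q.1 : ℕ) < k
        · rw [hFinl_lt p hik, hFinl_lt q hik'] at hab
          have := hfinj hab
          rw [Sum.inl.injEq, Prod.ext_iff] at this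
          obtain ⟨h1, h2⟩ := this
          have h1' : (p.1 : ℕ) = (q.1 : ℕ) := by
            rw [Fin.ext_iff] at h1
            exact h1
          congr 1
          exact Prod.ext (Fin.ext h1') h2
        · exfalso
          rw [hFinl_lt p hik, hFinl_ge q hik'] at hab
          rcases hstarVT q.2 with h | h
          · exact (hdisj _).1 (hab.trans h)
          · exact (hdisj _).2 (hab ▸ h)
        · exfalso
          rw [hFinl_ge p hik, hFinl_lt q hik'] at hab
          rcases hstarVT p.2 with h | h
          · exact (hdisj _).1 (hab.symm.trans h)
          · exact (hdisj _).2 (hab.symm ▸ h)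
        · rw [hFinl_ge p hik, hFinl_ge q hik'] at hab
          have h2 := hstarVinj hab
          have hp1 : (p.1 : ℕ) = k := by have := p.1.isLt; omega
          have hq1 : (q.1 : ℕ) = k := by have := q.1.isLt; omega
          congr 1
          exact Prod.ext (Fin.ext (by omega)) h2
      · exfalso
        by_cases hik : (p.1 : ℕ) < k
        · rw [hFinl_lt p hik] at hab
          have := hfinj hab
          simp at this
        · rw [hFinl_ge p hik] at hab
          rcases hstarVT p.2 with h | h
          · exact (hdisj _).1 ((h ▸ hab).symm)
          · exact (hdisj _).2 (hab ▸ h)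
    · rcases b with q | j'
      · exfalso
        by_cases hik : (q.1 : ℕ) < k
        · rw [hFinl_lt q hik] at hab
          have := hfinj hab
          simp at this
        · rw [hFinl_ge q hik] at hab
          rcases hstarVT q.2 with h | h
          · exact (hdisj _).1 (hab.trans h)
          · exact (hdisj _).2 (hab.symm ▸ h)
      · have hab2 : f (Sum.inr j) = f (Sum.inr j') := hab
        have := hfinj hab2
        rw [Sum.inr.injEq] at this
        exact congrArg Sum.inr this
  · -- membership
    intro x
    show F x ∈ s
    rcases x with p | j
    · by_cases hik : (p.1 : ℕ) < k
      · rw [hFinl_lt p hik]; exact hfs _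
      · rw [hFinl_ge p hik]; exact hstarVs _
    · exact hfs _

/-- The vertex-count threshold. -/
def NNb (ℓ k : ℕ) : ℕ := (k + ℓ/2 - 1)^2 + ℓ * (k * (ℓ-1) + (ℓ - ℓ/2))

lemma NNb_succ {ℓ : ℕ} (hℓ : 4 ≤ ℓ) (k : ℕ) : NNb ℓ k + ℓ ≤ NNb ℓ (k+1) := by
  unfold NNb
  have c1 : 1 ≤ k + ℓ/2 := by omega
  have c2 : 1 ≤ ℓ := by omega
  have c3 : ℓ/2 ≤ ℓ := by omega
  have c4 : 1 ≤ k + 1 + ℓ/2 := by omega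
  zify [c1, c2, c3, c4]
  have hl4 : (4 : ℤ) ≤ (ℓ : ℤ) := by exact_mod_cast hℓ
  have hk0 : (0 : ℤ) ≤ (k : ℤ) := Int.natCast_nonneg k
  have hr0 : (0 : ℤ) ≤ ((ℓ/2 : ℕ) : ℤ) := Int.natCast_nonneg _
  nlinarith [sq_nonneg ((ℓ : ℤ) - 2), hl4, hk0, hr0]

lemma main_lemma {ℓ : ℕ} (hℓ : 4 ≤ ℓ) {C : Fin n → Fin 2}
    (hC : ∀ {a b}, G.Adj a b → C a ≠ C b) :
    ∀ k : ℕ, ∀ s : Finset (Fin n), ¬ ContainsOn G s (starPathForest k ℓ) →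
      NNb ℓ k ≤ s.card → ein G s ≤ (k + ℓ/2 - 1) * s.card := by
  intro k
  induction k with
  | zero =>
    intro s hfree _
    have := base_lemma G hℓ hC s.card s rfl (spf_zero G hfree)
    simpa using this
  | succ k IH =>
    intro s hfree hcard
    have hh2 : 2 ≤ ℓ/2 := by omega
    set h' := ℓ/2 with hh'
    have hgoal_coef : k + 1 + h' - 1 = k + h' := by omega
    rw [hgoal_coef]
    by_cases hA : ∃ v ∈ s, ℓ*(k+2) - 1 ≤ degIn G s v
    · obtain ⟨v, hv, hdv⟩ := hA
      have hfree' : ¬ ContainsOn G (s \ {v}) (starPathForest k ℓ) := by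
        rintro ⟨g, hginj, hgs⟩
        apply hfree
        set img : Finset (Fin n) := Finset.univ.image g with himg
        have himgcard : img.card ≤ k * ℓ + ℓ := by
          calc img.card ≤ Fintype.card (Fin k × Fin ℓ ⊕ Fin ℓ) := by
                rw [← Finset.card_univ]
                exact Finset.card_image_le
            _ = k * ℓ + ℓ := by simp
        have hbig : (ℓ - 1) ≤ ((G.neighborFinset v ∩ s) \ img).card := by
          have hsd := Finset.le_card_sdiff img (G.neighborFinset v ∩ s)
          have h4 : ℓ*(k+2) - 1 ≤ (G.neighborFinset v ∩ s).card := hdv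
          have h5 : ℓ*(k+2) = k*ℓ + ℓ + ℓ := by ring
          omega
        obtain ⟨T, hTsub, hTcard⟩ := Finset.exists_subset_card_eq hbig
        apply extend_star G hℓ hv (hTsub.trans Finset.sdiff_subset) hTcard g hginj
          (fun x => (Finset.mem_sdiff.mp (hgs x)).1)
        intro x
        constructor
        · intro hcon
          have := (Finset.mem_sdiff.mp (hgs x)).2
          exact this (hcon ▸ Finset.mem_singleton_self v)
        · intro hcon
          have := hTsub hcon
          exact (Finset.mem_sdiff.mp this).2 (Finset.mem_image.mpr ⟨x, Finset.mem_univ x, rfl⟩)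
      have hcs1 : 1 ≤ s.card := Finset.card_pos.mpr ⟨v, hv⟩
      have hcard' : (s \ {v}).card = s.card - 1 := by
        rw [Finset.card_sdiff_of_subset (Finset.singleton_subset_iff.mpr hv), Finset.card_singleton]
      have hNN : NNb ℓ k ≤ s.card - 1 := by
        have := NNb_succ hℓ k
        omega
      have hrec := IH (s \ {v}) hfree' (by rw [hcard']; exact hNN)
      have h1 : ein G s ≤ ein G (s \ {v}) + ∑ w ∈ {v}, degIn G s w := ein_le_sdiff G s {v}
      rw [Finset.sum_singleton] at h1
      have hdeg : degIn G s v ≤ s.card - 1 := by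
        have hsb : G.neighborFinset v ∩ s ⊆ s.erase v := by
          intro x hx
          rw [Finset.mem_erase]
          rcases Finset.mem_inter.mp hx with ⟨hx1, hx2⟩
          exact ⟨fun hcon => G.notMem_neighborFinset_self v (hcon ▸ hx1), hx2⟩
        calc degIn G s v ≤ (s.erase v).card := Finset.card_le_card hsb
          _ = s.card - 1 := Finset.card_erase_of_mem hv
      have hstep : (k + h' - 1) * (s.card - 1) + (s.card - 1) ≤ (k + h') * s.card := by
        have e1 : k + h' - 1 + 1 = k + h' := by omega
        calc (k + h' - 1) * (s.card - 1) + (s.card - 1)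
            = (k + h' - 1 + 1) * (s.card - 1) := by ring
          _ = (k + h') * (s.card - 1) := by rw [e1]
          _ ≤ (k + h') * s.card := Nat.mul_le_mul_left _ (by omega)
      rw [hcard'] at hrec
      omega
    · push_neg at hA
      by_cases hB : ∃ v ∈ s, ℓ - 1 ≤ degIn G s v
      · obtain ⟨v, hv, hdv⟩ := hB
        obtain ⟨T, hTsub, hTcard⟩ := Finset.exists_subset_card_eq hdv
        set W : Finset (Fin n) := insert v T with hW
        have hvT : v ∉ T := fun hcon =>
          G.notMem_neighborFinset_self v (Finset.mem_inter.mp (hTsub hcon)).1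
        have hWcard : W.card = ℓ := by
          rw [hW, Finset.card_insert_of_notMem hvT, hTcard]
          omega
        have hWs : W ⊆ s := by
          intro x hx
          rcases Finset.mem_insert.mp hx with rfl | hx
          · exact hv
          · exact (Finset.mem_inter.mp (hTsub hx)).2
        have hfree' : ¬ ContainsOn G (s \ W) (starPathForest k ℓ) := by
          rintro ⟨g, hginj, hgs⟩
          apply hfree
          apply extend_star G hℓ hv hTsub hTcard g hginj
            (fun x => (Finset.mem_sdiff.mp (hgs x)).1)
          intro x
          have hnW := (Finset.mem_sdiff.mp (hgs x)).2
          constructor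
          · intro hcon
            exact hnW (by rw [hW, hcon]; exact Finset.mem_insert_self v T)
          · intro hcon
            exact hnW (by rw [hW]; exact Finset.mem_insert_of_mem hcon)
        have hℓcs : ℓ ≤ s.card := by
          have := Finset.card_le_card hWs
          omega
        have hcard' : (s \ W).card = s.card - ℓ := by
          rw [Finset.card_sdiff_of_subset hWs, hWcard]
        have hNN : NNb ℓ k ≤ s.card - ℓ := by
          have := NNb_succ hℓ k
          omega
        have hrec := IH (s \ W) hfree' (by rw [hcard']; exact hNN)
        have h1 : ein G s ≤ ein G (s \ W) + ∑ w ∈ W, degIn G s w := ein_le_sdiff G s W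
        have hsum : ∑ w ∈ W, degIn G s w ≤ ℓ * (ℓ*(k+2) - 2) := by
          calc ∑ w ∈ W, degIn G s w ≤ ∑ _w ∈ W, (ℓ*(k+2) - 2) := by
                apply Finset.sum_le_sum
                intro w hw
                have := hA w (hWs hw)
                omega
            _ = ℓ * (ℓ*(k+2) - 2) := by
                rw [Finset.sum_const, hWcard, smul_eq_mul]
        rw [hcard'] at hrec
        have harith : (k + h' - 1) * (s.card - ℓ) + ℓ * (ℓ*(k+2) - 2) ≤ (k + h') * s.card := by
          have hcs2 : NNb ℓ (k+1) ≤ s.card := hcard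
          have hNNeq : NNb ℓ (k+1) = (k + h')^2 + ℓ * ((k+1) * (ℓ-1) + (ℓ - h')) := by
            unfold NNb
            have e : k + 1 + ℓ/2 - 1 = k + h' := by omega
            rw [e]
          rw [hNNeq] at hcs2
          have hhl : h' ≤ ℓ := by omega
          have h2l : 2 ≤ ℓ*(k+2) := le_trans (by omega : 2 ≤ ℓ)
            (Nat.le_mul_of_pos_right ℓ (by omega))
          have h1k : 1 ≤ k + h' := by omega
          have h1l : 1 ≤ ℓ := by omega
          zify [hℓcs, hhl, h2l, h1k, h1l] at hcs2 ⊢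
          nlinarith [hcs2, sq_nonneg ((k : ℤ) + h')]
        omega
      · push_neg at hB
        have h2e : 2 * ein G s ≤ (ℓ - 2) * s.card := by
          rw [twice_ein]
          calc ∑ v ∈ s, degIn G s v ≤ ∑ _v ∈ s, (ℓ - 2) :=
                Finset.sum_le_sum (fun v hv => by have := hB v hv; omega)
            _ = (ℓ - 2) * s.card := by
                rw [Finset.sum_const, smul_eq_mul, Nat.mul_comm]
        have hle : (ℓ - 2) * s.card ≤ 2 * (h' * s.card) := by
          have : ℓ - 2 ≤ 2 * h' := by omega
          calc (ℓ - 2) * s.card ≤ (2 * h') * s.card := Nat.mul_le_mul_right _ this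
            _ = 2 * (h' * s.card) := by ring
        have hfin : h' * s.card ≤ (k + h') * s.card :=
          Nat.mul_le_mul_right _ (by omega)
        omega

end SPF

/-- **Lemma 3.2.** If `k ≥ 0`, `ℓ ≥ 4` and `G` is a `kS_{ℓ-1} ∪ P_ℓ`-free bipartite graph on
`n ≥ (k+⌊ℓ/2⌋-1)² - (k+⌊ℓ/2⌋-2)ℓ + ℓ²k + ℓ² - ℓ` vertices, then
`e(G) ≤ (k + ⌊ℓ/2⌋ - 1) n`. -/
theorem star_path_forest_stmt1 (k ℓ n : ℕ) (hℓ : 4 ≤ ℓ)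
    (hn : ((k : ℤ) + ((ℓ / 2 : ℕ) : ℤ) - 1) ^ 2 - ((k : ℤ) + ((ℓ / 2 : ℕ) : ℤ) - 2) * ℓ
        + (ℓ : ℤ) ^ 2 * k + (ℓ : ℤ) ^ 2 - ℓ ≤ (n : ℤ))
    (G : SimpleGraph (Fin n)) [DecidableRel G.Adj] (hbip : G.Colorable 2)
    (hfree : ¬ Contains G (starPathForest k ℓ)) :
    (G.edgeFinset.card : ℤ) ≤ ((k : ℤ) + ((ℓ / 2 : ℕ) : ℤ) - 1) * n := by
  classical
  obtain ⟨Co⟩ := hbip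
  have hC : ∀ {a b : Fin n}, G.Adj a b → Co a ≠ Co b := fun hab => Co.valid hab
  have hfree' : ¬ SPF.ContainsOn G Finset.univ (starPathForest k ℓ) := by
    rintro ⟨f, hf, -⟩
    exact hfree ⟨f, hf⟩
  have h1kh : 1 ≤ k + ℓ/2 := by omega
  have hNNcast : ((SPF.NNb ℓ k : ℤ)) + ℓ ≤ (n : ℤ) := by
    unfold SPF.NNb
    have c2 : 1 ≤ ℓ := by omega
    have c3 : ℓ/2 ≤ ℓ := by omega
    push_cast [h1kh, c2, c3]
    calc ((k : ℤ) + ((ℓ/2 : ℕ) : ℤ) - 1)^2 + (ℓ : ℤ) * ((k : ℤ) * ((ℓ : ℤ) - 1)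
          + ((ℓ : ℤ) - ((ℓ/2 : ℕ) : ℤ))) + (ℓ : ℤ)
        = ((k : ℤ) + ((ℓ / 2 : ℕ) : ℤ) - 1) ^ 2 - ((k : ℤ) + ((ℓ / 2 : ℕ) : ℤ) - 2) * ℓ
          + (ℓ : ℤ) ^ 2 * k + (ℓ : ℤ) ^ 2 - ℓ := by ring
      _ ≤ (n : ℤ) := hn
  have hNN : SPF.NNb ℓ k ≤ (Finset.univ : Finset (Fin n)).card := by
    rw [Finset.card_univ, Fintype.card_fin]
    have hl0 : (0 : ℤ) ≤ (ℓ : ℤ) := Int.natCast_nonneg ℓ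
    exact_mod_cast le_trans (by omega : ((SPF.NNb ℓ k : ℤ)) ≤ (SPF.NNb ℓ k : ℤ) + ℓ) hNNcast
  have hmain := SPF.main_lemma G hℓ hC k Finset.univ hfree' hNN
  have hein : SPF.ein G Finset.univ = G.edgeFinset.card := by
    unfold SPF.ein SPF.einset
    rw [Finset.filter_true_of_mem]
    intro e _
    intro x _
    exact Finset.mem_univ x
  rw [hein, Finset.card_univ, Fintype.card_fin] at hmain
  have hcast : ((G.edgeFinset.card : ℤ)) ≤ ((k + ℓ/2 - 1 : ℕ) : ℤ) * (n : ℤ) := by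
    exact_mod_cast hmain
  calc (G.edgeFinset.card : ℤ) ≤ ((k + ℓ/2 - 1 : ℕ) : ℤ) * (n : ℤ) := hcast
    _ = ((k : ℤ) + ((ℓ / 2 : ℕ) : ℤ) - 1) * n := by
        congr 1
        push_cast [h1kh]
        ring
end

section
/- Let G be a graph of order n with minimum degree δ and e edges. Then the spectral radius of G satisfies ρ(G) ≤ (δ − 1 + √(8e − 4δn + (δ+1)²))/2. -/
open SimpleGraph Finset

/-- The spectral radius of a finite graph: the largest eigenvalue of its
adjacency matrix, expressed as the supremum of the set of eigenvalues. -/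
noncomputable def specRad {V : Type*} [Fintype V] (G : SimpleGraph V) : ℝ :=
  letI := Classical.decRel G.Adj
  sSup {t : ℝ | ∃ x : V → ℝ, x ≠ 0 ∧ (G.adjMatrix ℝ).mulVec x = t • x}

section aux

variable {n : ℕ} (G : SimpleGraph (Fin n)) [DecidableRel G.Adj]

/-- Handshake: `δ n ≤ 2 e`. -/
lemma hsf_handshake : (G.minDegree : ℝ) * n ≤ 2 * G.edgeFinset.card := by
  have h : n * G.minDegree ≤ ∑ v : Fin n, G.degree v := by
    calc n * G.minDegree = ∑ _v : Fin n, G.minDegree := by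
          simp [Finset.sum_const, Finset.card_univ]
      _ ≤ ∑ v : Fin n, G.degree v :=
          Finset.sum_le_sum fun v _ => G.minDegree_le_degree v
  rw [SimpleGraph.sum_degrees_eq_twice_card_edges] at h
  exact_mod_cast le_of_eq_of_le (mul_comm _ _) (Nat.cast_le.mpr h)

/-- The sqrt argument is nonnegative. -/
lemma hsf_disc_nonneg :
    0 ≤ 8 * (G.edgeFinset.card : ℝ) - 4 * G.minDegree * n + ((G.minDegree : ℝ) + 1) ^ 2 := by
  have h := hsf_handshake G
  nlinarith [sq_nonneg ((G.minDegree : ℝ) + 1)]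

/-- The bound is at least `δ`, in particular nonnegative. -/
lemma hsf_bound_ge : (G.minDegree : ℝ) ≤ ((G.minDegree : ℝ) - 1 +
    Real.sqrt (8 * G.edgeFinset.card - 4 * G.minDegree * n +
      ((G.minDegree : ℝ) + 1) ^ 2)) / 2 := by
  set d : ℝ := (G.minDegree : ℝ) with hd
  have hd0 : 0 ≤ d := by positivity
  have h1 : (d + 1) ^ 2 ≤ 8 * (G.edgeFinset.card : ℝ) - 4 * d * n + (d + 1) ^ 2 := by
    have := hsf_handshake G; linarith
  have h2 : d + 1 ≤ Real.sqrt (8 * (G.edgeFinset.card : ℝ) - 4 * d * n + (d + 1) ^ 2) := by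
    calc d + 1 = Real.sqrt ((d + 1) ^ 2) := (Real.sqrt_sq (by linarith)).symm
      _ ≤ _ := Real.sqrt_le_sqrt h1
  linarith

/-- Row sums of degrees over neighborhoods. -/
lemma hsf_rowsum (v : Fin n) :
    (∑ w ∈ G.neighborFinset v, (G.degree w : ℝ)) ≤
      2 * G.edgeFinset.card - G.degree v -
        G.minDegree * ((n : ℝ) - 1 - G.degree v) := by
  classical
  set Nv := G.neighborFinset v with hNv
  have hvN : v ∉ Nv := G.notMem_neighborFinset_self v
  have hsum : ∑ w ∈ univ \ insert v Nv, (G.degree w : ℝ)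
      + ∑ w ∈ insert v Nv, (G.degree w : ℝ) = ∑ w : Fin n, (G.degree w : ℝ) :=
    Finset.sum_sdiff (Finset.subset_univ _)
  have hins : ∑ w ∈ insert v Nv, (G.degree w : ℝ)
      = (G.degree v : ℝ) + ∑ w ∈ Nv, (G.degree w : ℝ) := Finset.sum_insert hvN
  have htot : ∑ w : Fin n, (G.degree w : ℝ) = 2 * G.edgeFinset.card := by
    rw [← Nat.cast_sum]
    rw [SimpleGraph.sum_degrees_eq_twice_card_edges]
    push_cast; ring
  have hdeg : G.degree v + 1 ≤ n := by
    have := G.degree_lt_card_verts v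
    simpa [Fintype.card_fin] using this
  have hcard : ((univ \ insert v Nv).card : ℝ) = (n : ℝ) - 1 - G.degree v := by
    rw [Finset.card_sdiff_of_subset (Finset.subset_univ _), Finset.card_insert_of_notMem hvN]
    rw [hNv, G.card_neighborFinset_eq_degree, Finset.card_univ, Fintype.card_fin]
    rw [Nat.cast_sub (by omega)]
    push_cast; ring
  have hlb : (G.minDegree : ℝ) * ((n : ℝ) - 1 - G.degree v)
      ≤ ∑ w ∈ univ \ insert v Nv, (G.degree w : ℝ) := by
    rw [← hcard]
    have := Finset.card_nsmul_le_sum (univ \ insert v Nv)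
      (fun w => (G.degree w : ℝ)) (G.minDegree : ℝ)
      (fun w _ => by exact_mod_cast Nat.cast_le.mpr (G.minDegree_le_degree w))
    simpa [nsmul_eq_mul, mul_comm] using this
  linarith

/-- Core: any real eigenvalue is at most the bound. -/
lemma hsf_key (t : ℝ) (x : Fin n → ℝ) (hx : x ≠ 0)
    (heig : (G.adjMatrix ℝ).mulVec x = t • x) :
    t ≤ ((G.minDegree : ℝ) - 1 +
      Real.sqrt (8 * G.edgeFinset.card - 4 * G.minDegree * n +
        ((G.minDegree : ℝ) + 1) ^ 2)) / 2 := by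
  classical
  set d : ℝ := (G.minDegree : ℝ) with hd
  set m : ℝ := (G.edgeFinset.card : ℝ) with hm
  set s : ℝ := Real.sqrt (8 * m - 4 * d * n + (d + 1) ^ 2) with hs
  set B : ℝ := (d - 1 + s) / 2 with hB
  have hd0 : 0 ≤ d := by positivity
  have hs2 : s ^ 2 = 8 * m - 4 * d * n + (d + 1) ^ 2 :=
    Real.sq_sqrt (hsf_disc_nonneg G)
  have hdB : d ≤ B := hsf_bound_ge G
  have hB2 : B ^ 2 = (d - 1) * B + (2 * m - d * ((n : ℝ) - 1)) := by
    rw [hB]; nlinarith [hs2]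
  set c : ℝ := B - d + 1 with hc
  have hc1 : (1 : ℝ) ≤ c := by rw [hc]; linarith
  set z : Fin n → ℝ := fun v => (G.degree v : ℝ) + c with hz
  set y : Fin n → ℝ := fun v => |x v| with hy
  have hzpos : ∀ v, 0 < z v := fun v => by
    have : (0 : ℝ) ≤ (G.degree v : ℝ) := by positivity
    simp only [hz]; linarith
  have hynn : ∀ v, 0 ≤ y v := fun v => abs_nonneg _
  -- A z ≤ B z componentwise
  have h2 : ∀ v, ((G.adjMatrix ℝ).mulVec z) v ≤ B * z v := by
    intro v
    rw [SimpleGraph.adjMatrix_mulVec_apply]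
    have hsum : ∑ w ∈ G.neighborFinset v, z w
        = (∑ w ∈ G.neighborFinset v, (G.degree w : ℝ)) + (G.degree v : ℝ) * c := by
      simp only [hz, Finset.sum_add_distrib, Finset.sum_const,
        G.card_neighborFinset_eq_degree, nsmul_eq_mul]
    have hrow := hsf_rowsum G v
    have hBc : B * c = 2 * m - d * ((n : ℝ) - 1) := by
      rw [hc]; nlinarith [hB2]
    have hBdc : d - 1 + c = B := by rw [hc]; ring
    rw [hsum]
    have : z v = (G.degree v : ℝ) + c := rfl
    rw [this]
    nlinarith [hrow, hBc, hBdc]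
  -- |t| y ≤ A y componentwise
  have h1 : ∀ v, |t| * y v ≤ ((G.adjMatrix ℝ).mulVec y) v := by
    intro v
    have hv : ((G.adjMatrix ℝ).mulVec x) v = t * x v := by
      rw [heig]; simp
    rw [SimpleGraph.adjMatrix_mulVec_apply] at hv ⊢
    calc |t| * y v = |t * x v| := by rw [hy]; simp [abs_mul]
      _ = |∑ w ∈ G.neighborFinset v, x w| := by rw [← hv]
      _ ≤ ∑ w ∈ G.neighborFinset v, |x w| := Finset.abs_sum_le_sum_abs _ _
      _ = ∑ w ∈ G.neighborFinset v, y w := rfl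
  -- symmetry swap
  have hsymm : ∀ v w, (G.adjMatrix ℝ) v w = (G.adjMatrix ℝ) w v := by
    intro v w
    have := G.isSymm_adjMatrix (α := ℝ)
    exact (congrFun (congrFun this w) v).symm ▸ (Matrix.IsSymm.apply this w v)
  have hswap : ∑ v, ((G.adjMatrix ℝ).mulVec y) v * z v
      = ∑ v, y v * ((G.adjMatrix ℝ).mulVec z) v := by
    simp only [Matrix.mulVec, dotProduct, Finset.sum_mul, Finset.mul_sum]
    rw [Finset.sum_comm]
    refine Finset.sum_congr rfl fun v _ => Finset.sum_congr rfl fun w _ => ?_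
    rw [hsymm w v]; ring
  -- positivity of pairing
  obtain ⟨v0, hv0⟩ : ∃ v, x v ≠ 0 := Function.ne_iff.mp hx
  have hSpos : 0 < ∑ v, y v * z v := by
    refine Finset.sum_pos' (fun v _ => mul_nonneg (hynn v) (hzpos v).le) ⟨v0, Finset.mem_univ _, ?_⟩
    exact mul_pos (abs_pos.mpr hv0) (hzpos v0)
  -- chain
  have hchain : |t| * (∑ v, y v * z v) ≤ B * (∑ v, y v * z v) := by
    calc |t| * (∑ v, y v * z v) = ∑ v, (|t| * y v) * z v := by
          rw [Finset.mul_sum]; exact Finset.sum_congr rfl fun v _ => by ring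
      _ ≤ ∑ v, ((G.adjMatrix ℝ).mulVec y) v * z v :=
          Finset.sum_le_sum fun v _ =>
            mul_le_mul_of_nonneg_right (h1 v) (hzpos v).le
      _ = ∑ v, y v * ((G.adjMatrix ℝ).mulVec z) v := hswap
      _ ≤ ∑ v, y v * (B * z v) :=
          Finset.sum_le_sum fun v _ => mul_le_mul_of_nonneg_left (h2 v) (hynn v)
      _ = B * (∑ v, y v * z v) := by
          rw [Finset.mul_sum]; exact Finset.sum_congr rfl fun v _ => by ring
  have habs : |t| ≤ B := by
    have h := hchain
    rw [mul_comm |t| _, mul_comm B _] at h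
    exact le_of_mul_le_mul_left h hSpos
  exact le_trans (le_abs_self t) habs

end aux

/-- **Hong–Shu–Fang / Nikiforov.**  For a graph `G` of order `n` with minimum degree `δ`
and `e` edges, `ρ(G) ≤ (δ − 1 + √(8e − 4δn + (δ+1)²))/2`. -/
theorem star_path_forest_stmt7 (n : ℕ) (G : SimpleGraph (Fin n)) [DecidableRel G.Adj] :
    specRad G ≤ ((G.minDegree : ℝ) - 1 +
      Real.sqrt (8 * G.edgeFinset.card - 4 * G.minDegree * n +
        ((G.minDegree : ℝ) + 1) ^ 2)) / 2 := by
  unfold specRad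
  apply Real.sSup_le
  · rintro t ⟨x, hx, heig⟩
    have hinst : Classical.decRel G.Adj = ‹DecidableRel G.Adj› := Subsingleton.elim _ _
    rw [hinst] at heig
    exact hsf_key G t x hx heig
  · have h1 := hsf_bound_ge G
    have h2 : (0 : ℝ) ≤ (G.minDegree : ℝ) := by positivity
    linarith
end
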